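/- Under the hypotheses and notation of the frame-equivalence theorem (0 < μ < 1, μ₃ > 0, Ω₃ > 0 with Ω₃ ≠ 1, Ω₃²r₁₃³ = 1−μ+μ₃, μ̄ = μ₃/(1−μ+μ₃), μ̄₂ = μ/(1−μ+μ₃), r̄₁₂ = 1/r₁₃, Ω̄₂ = 1/Ω₃), let T = 2π/|Ω₃−1| and T̄ = 2π/|Ω̄₂−1|, and note T̄ = Ω₃T. Suppose γ solves the m₁-m₂ frame CCR4BP equations of motion with θ₃(t) = (Ω₃−1)t + θ₃,₀ on [t₀, t₀+T] with r₁, r₂, r₃ > 0 throughout. Then: (i) θ₃(t₀+T) = θ₃(t₀) ± 2π, so Φ_{θ₃(t₀+T)} = Φ_{θ₃(t₀)}; (ii) the curve γ̄(t̄) := Φ_{θ₃(t̄/Ω₃)}(γ(t̄/Ω₃)) solves the m₁-m₃ frame CCR4BP equations of motion with θ₂(t̄) = (Ω̄₂−1)t̄ − θ₃,₀ on [Ω₃t₀, Ω₃t₀+T̄]; and (iii) γ̄(Ω₃t₀) = Φ_{θ₃(t₀)}(γ(t₀)) and γ̄(Ω₃t₀+T̄) = Φ_{θ₃(t₀)}(γ(t₀+T)).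 Consequently the m₁-m₃ frame stroboscopic map applied to Φ_{θ₃(t₀)}(γ(t₀)) equals Φ_{θ₃(t₀)} applied to the m₁-m₂ frame stroboscopic image of γ(t₀): the two stroboscopic maps are conjugated by Φ_{θ₃(t₀)} (Eq. (13) of the paper, F_{μ̄₂} ∘ Φ_θ₃ = Φ_θ₃ ∘ F_{μ₃}). -/

import Mathlib

open Real

/-- The planar CCR4BP equations of motion in the synodic frame of a primary (mass ratio
`μ`) and secondary, perturbed by a third body of mass ratio `μp` at radius `rp` with
inertial angular rate `Ωp` and phase `θ(t) = (Ωp − 1)t + θ₀` (see the paper, Eq. (2)/(4)). -/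
def IsCCR4BPSolution (μ μp rp Ωp θ₀ : ℝ) (I : Set ℝ) (x y px py : ℝ → ℝ) : Prop :=
  ∀ t ∈ I,
    let θ := (Ωp - 1) * t + θ₀
    let x₃ := -μ + rp * Real.cos θ
    let y₃ := rp * Real.sin θ
    let r₁ := Real.sqrt ((x t + μ) ^ 2 + (y t) ^ 2)
    let r₂ := Real.sqrt ((x t - 1 + μ) ^ 2 + (y t) ^ 2)
    let r₃ := Real.sqrt ((x t - x₃) ^ 2 + (y t - y₃) ^ 2)
    HasDerivAt x (px t + y t) t ∧
    HasDerivAt y (py t - x t) t ∧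
    HasDerivAt px
      (py t - (1 - μ) * (x t + μ) / r₁ ^ 3 - μ * (x t - (1 - μ)) / r₂ ^ 3
        - μp * (x t - x₃) / r₃ ^ 3 - μp * Real.cos θ / rp ^ 2) t ∧
    HasDerivAt py
      (-(px t) - (1 - μ) * (y t) / r₁ ^ 3 - μ * (y t) / r₂ ^ 3
        - μp * (y t - y₃) / r₃ ^ 3 - μp * Real.sin θ / rp ^ 2) t

/-- The frame-change map `Φ_θ` taking a CCR4BP state from the m₁-m₂ synodic frame to
the m₁-m₃ synodic frame when the angle between the frames' x-axes is `θ`. -/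
noncomputable def phiMap (μ μBar r₁₃ Ω₃ θ : ℝ) (z : ℝ × ℝ × ℝ × ℝ) : ℝ × ℝ × ℝ × ℝ :=
  (((z.1 + μ) * Real.cos θ + z.2.1 * Real.sin θ) / r₁₃ - μBar,
   (-((z.1 + μ) * Real.sin θ) + z.2.1 * Real.cos θ) / r₁₃,
   (z.2.2.1 * Real.cos θ + (z.2.2.2 + μ) * Real.sin θ) / (r₁₃ * Ω₃),
   (-(z.2.2.1 * Real.sin θ) + (z.2.2.2 + μ) * Real.cos θ) / (r₁₃ * Ω₃) - μBar)

set_option maxHeartbeats 4000000 in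
/-- Eq. (13) of the paper, `F_{μ̄₂} ∘ Φ_{θ₃} = Φ_{θ₃} ∘ F_{μ₃}`.
With `T = 2π/|Ω₃−1|`, `T̄ = 2π/|Ω̄₂−1|` (so `T̄ = Ω₃T`), if `γ` solves the m₁-m₂ frame
CCR4BP equations on `[t₀, t₀+T]` with phase `θ₃(t) = (Ω₃−1)t + θ₃₀`, then:
(i) `θ₃(t₀+T) = θ₃(t₀) ± 2π`, so `Φ_{θ₃(t₀+T)} = Φ_{θ₃(t₀)}`;
(ii) `γ̄(t̄) = Φ_{θ₃(t̄/Ω₃)}(γ(t̄/Ω₃))` solves the m₁-m₃ frame CCR4BP equations with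
`θ₂(t̄) = (Ω̄₂−1)t̄ − θ₃₀` on `[Ω₃t₀, Ω₃t₀+T̄]`; and
(iii) `γ̄(Ω₃t₀) = Φ_{θ₃(t₀)}(γ(t₀))` and `γ̄(Ω₃t₀+T̄) = Φ_{θ₃(t₀)}(γ(t₀+T))`;
hence the two stroboscopic maps are conjugated by `Φ_{θ₃(t₀)}`. -/
theorem ccr4bp_stroboscopic_conjugacy
    (μ μ₃ Ω₃ r₁₃ θ₃₀ t₀ : ℝ)
    (hμ0 : 0 < μ) (hμ1 : μ < 1) (hμ₃ : 0 < μ₃) (hΩ : 0 < Ω₃) (hΩ1 : Ω₃ ≠ 1)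
    (hr : 0 < r₁₃) (hKepler : Ω₃ ^ 2 * r₁₃ ^ 3 = 1 - μ + μ₃)
    (μBar μBar₂ rBar₁₂ ΩBar₂ T TBar : ℝ)
    (hμBar : μBar = μ₃ / (1 - μ + μ₃)) (hμBar₂ : μBar₂ = μ / (1 - μ + μ₃))
    (hrBar : rBar₁₂ = 1 / r₁₃) (hΩBar : ΩBar₂ = 1 / Ω₃)
    (hT : T = 2 * Real.pi / |Ω₃ - 1|) (hTBar : TBar = 2 * Real.pi / |ΩBar₂ - 1|)
    (x y px py : ℝ → ℝ)
    (hsol : IsCCR4BPSolution μ μ₃ r₁₃ Ω₃ θ₃₀ (Set.Icc t₀ (t₀ + T)) x y px py)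
    (hpos : ∀ t ∈ Set.Icc t₀ (t₀ + T),
      0 < Real.sqrt ((x t + μ) ^ 2 + (y t) ^ 2) ∧
      0 < Real.sqrt ((x t - 1 + μ) ^ 2 + (y t) ^ 2) ∧
      0 < Real.sqrt ((x t - (-μ + r₁₃ * Real.cos ((Ω₃ - 1) * t + θ₃₀))) ^ 2 +
            (y t - r₁₃ * Real.sin ((Ω₃ - 1) * t + θ₃₀)) ^ 2))
    (γBar : ℝ → ℝ × ℝ × ℝ × ℝ)
    (hγBar : ∀ s : ℝ, γBar s =
      phiMap μ μBar r₁₃ Ω₃ ((Ω₃ - 1) * (s / Ω₃) + θ₃₀)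
        (x (s / Ω₃), y (s / Ω₃), px (s / Ω₃), py (s / Ω₃))) :
    -- T̄ = Ω₃ T
    TBar = Ω₃ * T ∧
    -- (i) θ₃(t₀+T) = θ₃(t₀) ± 2π, hence Φ_{θ₃(t₀+T)} = Φ_{θ₃(t₀)}
    (((Ω₃ - 1) * (t₀ + T) + θ₃₀ = ((Ω₃ - 1) * t₀ + θ₃₀) + 2 * Real.pi) ∨
      ((Ω₃ - 1) * (t₀ + T) + θ₃₀ = ((Ω₃ - 1) * t₀ + θ₃₀) - 2 * Real.pi)) ∧
    phiMap μ μBar r₁₃ Ω₃ ((Ω₃ - 1) * (t₀ + T) + θ₃₀) =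
      phiMap μ μBar r₁₃ Ω₃ ((Ω₃ - 1) * t₀ + θ₃₀) ∧
    -- (ii) γ̄ solves the m₁-m₃ frame equations with θ₂(t̄) = (Ω̄₂−1)t̄ − θ₃₀
    IsCCR4BPSolution μBar μBar₂ rBar₁₂ ΩBar₂ (-θ₃₀)
      (Set.Icc (Ω₃ * t₀) (Ω₃ * t₀ + TBar))
      (fun s => (γBar s).1) (fun s => (γBar s).2.1)
      (fun s => (γBar s).2.2.1) (fun s => (γBar s).2.2.2) ∧
    -- (iii) endpoint identities: the stroboscopic maps are conjugated by Φ_{θ₃(t₀)}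
    γBar (Ω₃ * t₀) =
      phiMap μ μBar r₁₃ Ω₃ ((Ω₃ - 1) * t₀ + θ₃₀) (x t₀, y t₀, px t₀, py t₀) ∧
    γBar (Ω₃ * t₀ + TBar) =
      phiMap μ μBar r₁₃ Ω₃ ((Ω₃ - 1) * t₀ + θ₃₀)
        (x (t₀ + T), y (t₀ + T), px (t₀ + T), py (t₀ + T)) := by

  have hΩ0 : Ω₃ ≠ 0 := ne_of_gt hΩ
  have hsub : Ω₃ - 1 ≠ 0 := sub_ne_zero.mpr hΩ1
  have habs : |Ω₃ - 1| ≠ 0 := abs_ne_zero.mpr hsub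
  have habs' : (0:ℝ) < |Ω₃ - 1| := abs_pos.mpr hsub
  have hT1 : TBar = Ω₃ * T := by
    rw [hTBar, hT, hΩBar]
    rw [show 1/Ω₃ - 1 = -(Ω₃-1)/Ω₃ by field_simp; ring]
    rw [abs_div, abs_neg, abs_of_pos hΩ]
    field_simp
  have hper : (((Ω₃ - 1) * (t₀ + T) + θ₃₀ = ((Ω₃ - 1) * t₀ + θ₃₀) + 2 * Real.pi) ∨
      ((Ω₃ - 1) * (t₀ + T) + θ₃₀ = ((Ω₃ - 1) * t₀ + θ₃₀) - 2 * Real.pi)) := by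
    rcases lt_or_gt_of_ne hΩ1 with h | h
    · right
      rw [hT, abs_of_neg (by linarith : Ω₃ - 1 < 0)]
      have h0 : (Ω₃ - 1) * (2 * Real.pi / -(Ω₃ - 1)) = -(2 * Real.pi) := by
        rw [div_neg, mul_neg, neg_inj, mul_div_assoc', mul_comm,
          mul_div_assoc, div_self hsub, mul_one]
      rw [mul_add, h0]; ring
    · left
      rw [hT, abs_of_pos (by linarith : (0:ℝ) < Ω₃ - 1)]
      have h0 : (Ω₃ - 1) * (2 * Real.pi / (Ω₃ - 1)) = 2 * Real.pi := by
        rw [mul_div_assoc', mul_comm, mul_div_assoc, div_self hsub, mul_one]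
      rw [mul_add, h0]; ring
  have hphi : phiMap μ μBar r₁₃ Ω₃ ((Ω₃ - 1) * (t₀ + T) + θ₃₀) =
      phiMap μ μBar r₁₃ Ω₃ ((Ω₃ - 1) * t₀ + θ₃₀) := by
    rcases hper with h | h <;> rw [h] <;> funext z <;>
      simp [phiMap, Real.cos_add_two_pi, Real.sin_add_two_pi,
        Real.cos_sub_two_pi, Real.sin_sub_two_pi]
  refine ⟨hT1, hper, hphi, ?_, ?_, ?_⟩
  · intro s hs
    have hts : s / Ω₃ ∈ Set.Icc t₀ (t₀ + T) := by
      constructor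
      · rw [le_div_iff₀ hΩ]
        have := hs.1; linarith [mul_comm Ω₃ t₀]
      · rw [div_le_iff₀ hΩ]
        have h2 := hs.2
        rw [hT1] at h2
        have := mul_add Ω₃ t₀ T
        linarith [mul_comm Ω₃ (t₀ + T)]
    have hneg : (ΩBar₂ - 1) * s + -θ₃₀ = -((Ω₃ - 1) * (s / Ω₃) + θ₃₀) := by
      rw [hΩBar]; field_simp; ring
    obtain ⟨hdx, hdy, hdpx, hdpy⟩ := hsol (s/Ω₃) hts
    obtain ⟨hr1, hr2, hr3⟩ := hpos (s/Ω₃) hts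
    have hid : HasDerivAt (fun u : ℝ => u / Ω₃) (1/Ω₃) s := by
      simpa using (hasDerivAt_id s).div_const Ω₃
    have hθd : HasDerivAt (fun u : ℝ => (Ω₃-1) * (u/Ω₃) + θ₃₀) ((Ω₃-1) * (1/Ω₃)) s :=
      (hid.const_mul (Ω₃-1)).add_const θ₃₀
    have hcosd : HasDerivAt (fun u : ℝ => Real.cos ((Ω₃-1)*(u/Ω₃)+θ₃₀))
        (-Real.sin ((Ω₃-1)*(s/Ω₃)+θ₃₀) * ((Ω₃-1)*(1/Ω₃))) s :=
      (Real.hasDerivAt_cos _).comp s hθd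
    have hsind : HasDerivAt (fun u : ℝ => Real.sin ((Ω₃-1)*(u/Ω₃)+θ₃₀))
        (Real.cos ((Ω₃-1)*(s/Ω₃)+θ₃₀) * ((Ω₃-1)*(1/Ω₃))) s :=
      (Real.hasDerivAt_sin _).comp s hθd
    have hxd : HasDerivAt (fun u : ℝ => x (u/Ω₃)) ((px (s/Ω₃) + y (s/Ω₃)) * (1/Ω₃)) s :=
      hdx.comp s hid
    have hyd : HasDerivAt (fun u : ℝ => y (u/Ω₃)) ((py (s/Ω₃) - x (s/Ω₃)) * (1/Ω₃)) s :=
      hdy.comp s hid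
    have hpxd := hdpx.comp s hid
    have hpyd := hdpy.comp s hid
    simp only [Function.comp_def] at hpxd hpyd
    have hfX : (fun u => (γBar u).1) = fun u =>
        ((x (u/Ω₃) + μ) * Real.cos ((Ω₃-1)*(u/Ω₃)+θ₃₀) +
          y (u/Ω₃) * Real.sin ((Ω₃-1)*(u/Ω₃)+θ₃₀)) / r₁₃ - μBar := by
      funext u; rw [hγBar]; rfl
    have hfY : (fun u => (γBar u).2.1) = fun u =>
        (-((x (u/Ω₃) + μ) * Real.sin ((Ω₃-1)*(u/Ω₃)+θ₃₀)) +
          y (u/Ω₃) * Real.cos ((Ω₃-1)*(u/Ω₃)+θ₃₀)) / r₁₃ := by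
      funext u; rw [hγBar]; rfl
    have hfPX : (fun u => (γBar u).2.2.1) = fun u =>
        (px (u/Ω₃) * Real.cos ((Ω₃-1)*(u/Ω₃)+θ₃₀) +
          (py (u/Ω₃) + μ) * Real.sin ((Ω₃-1)*(u/Ω₃)+θ₃₀)) / (r₁₃ * Ω₃) := by
      funext u; rw [hγBar]; rfl
    have hfPY : (fun u => (γBar u).2.2.2) = fun u =>
        (-(px (u/Ω₃) * Real.sin ((Ω₃-1)*(u/Ω₃)+θ₃₀)) +
          (py (u/Ω₃) + μ) * Real.cos ((Ω₃-1)*(u/Ω₃)+θ₃₀)) / (r₁₃ * Ω₃) - μBar := by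
      funext u; rw [hγBar]; rfl
    have hXd := (((((hxd.add_const μ).mul hcosd).add (hyd.mul hsind)).div_const r₁₃).sub_const μBar)
    simp only [Pi.mul_apply, Pi.add_apply, Pi.neg_apply] at hXd
    rw [← hfX] at hXd
    have hYd := ((((hxd.add_const μ).mul hsind).neg.add (hyd.mul hcosd)).div_const r₁₃)
    simp only [Pi.mul_apply, Pi.add_apply, Pi.neg_apply] at hYd
    rw [← hfY] at hYd
    have hPXd := (((hpxd.mul hcosd).add ((hpyd.add_const μ).mul hsind)).div_const (r₁₃ * Ω₃))
    simp only [Pi.mul_apply, Pi.add_apply, Pi.neg_apply] at hPXd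
    rw [← hfPX] at hPXd
    have hPYd := ((((hpxd.mul hsind).neg.add ((hpyd.add_const μ).mul hcosd)).div_const (r₁₃ * Ω₃)).sub_const μBar)
    simp only [Pi.mul_apply, Pi.add_apply, Pi.neg_apply] at hPYd
    rw [← hfPY] at hPYd
    refine ⟨?_, ?_, ?_, ?_⟩
    · convert hXd using 1
      · rfl
      · rfl
      simp only [hγBar, phiMap]
      field_simp
      ring
    · convert hYd using 1
      · rfl
      · rfl
      simp only [hγBar, phiMap]
      field_simp
      ring
    · convert hPXd using 1
      · rfl
      · rfl
      simp only [hγBar, phiMap]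
      rw [hneg, Real.cos_neg, Real.sin_neg, hrBar]
      set C := Real.cos ((Ω₃-1)*(s/Ω₃)+θ₃₀) with hC
      set S := Real.sin ((Ω₃-1)*(s/Ω₃)+θ₃₀) with hS
      set X := x (s/Ω₃) with hXv
      set Y := y (s/Ω₃) with hYv
      set PX := px (s/Ω₃) with hPXv
      set PY := py (s/Ω₃) with hPYv
      have hpy : S^2 + C^2 = 1 := by rw [hS, hC]; exact Real.sin_sq_add_cos_sq _
      have hS2 : S^2 = 1 - C^2 := by linarith
      set r1 := Real.sqrt ((X + μ)^2 + Y^2) with hr1d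
      set r2 := Real.sqrt ((X - 1 + μ)^2 + Y^2) with hr2d
      set r3 := Real.sqrt ((X - (-μ + r₁₃ * C))^2 + (Y - r₁₃ * S)^2) with hr3d
      have hr1sq : r1^2 = (X + μ)^2 + Y^2 := by
        rw [hr1d]; exact Real.sq_sqrt (by positivity)
      have hr2sq : r2^2 = (X - 1 + μ)^2 + Y^2 := by
        rw [hr2d]; exact Real.sq_sqrt (by positivity)
      have hr3sq : r3^2 = (X - (-μ + r₁₃ * C))^2 + (Y - r₁₃ * S)^2 := by
        rw [hr3d]; exact Real.sq_sqrt (by positivity)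
      have hr1' : (0:ℝ) < r1 := hr1
      have hr2' : (0:ℝ) < r2 := hr2
      have hr3' : (0:ℝ) < r3 := hr3
      have E1 : (((X + μ) * C + Y * S) / r₁₃ - μBar + μBar) ^ 2
          + ((-((X + μ) * S) + Y * C) / r₁₃) ^ 2 = (r1/r₁₃)^2 := by
        field_simp
        linear_combination ((X+μ)^2+Y^2) * hpy - hr1sq
      have E2 : (((X + μ) * C + Y * S) / r₁₃ - μBar - 1 + μBar) ^ 2
          + ((-((X + μ) * S) + Y * C) / r₁₃) ^ 2 = (r3/r₁₃)^2 := by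
        field_simp
        linear_combination (((X+μ)^2+Y^2) - r₁₃^2) * hpy - hr3sq
      have E3 : (((X + μ) * C + Y * S) / r₁₃ - μBar - (-μBar + 1 / r₁₃ * C)) ^ 2
          + ((-((X + μ) * S) + Y * C) / r₁₃ - 1 / r₁₃ * -S) ^ 2 = (r2/r₁₃)^2 := by
        field_simp
        linear_combination (((X-1+μ)^2+Y^2)) * hpy - hr2sq
      rw [E1, E2, E3, Real.sqrt_sq (div_nonneg hr1'.le hr.le),
        Real.sqrt_sq (div_nonneg hr3'.le hr.le), Real.sqrt_sq (div_nonneg hr2'.le hr.le)]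
      rw [hμBar, hμBar₂, ← hKepler]
      field_simp
      ring_nf
      rw [hS2]
      linear_combination (-(C*(X+μ)+S*Y) * Ω₃^2 * r₁₃^2 * r3^3 * r2^3) * hKepler
    · convert hPYd using 1
      · rfl
      · rfl
      simp only [hγBar, phiMap]
      rw [hneg, Real.cos_neg, Real.sin_neg, hrBar]
      set C := Real.cos ((Ω₃-1)*(s/Ω₃)+θ₃₀) with hC
      set S := Real.sin ((Ω₃-1)*(s/Ω₃)+θ₃₀) with hS
      set X := x (s/Ω₃) with hXv
      set Y := y (s/Ω₃) with hYv
      set PX := px (s/Ω₃) with hPXv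
      set PY := py (s/Ω₃) with hPYv
      have hpy : S^2 + C^2 = 1 := by rw [hS, hC]; exact Real.sin_sq_add_cos_sq _
      have hS2 : S^2 = 1 - C^2 := by linarith
      set r1 := Real.sqrt ((X + μ)^2 + Y^2) with hr1d
      set r2 := Real.sqrt ((X - 1 + μ)^2 + Y^2) with hr2d
      set r3 := Real.sqrt ((X - (-μ + r₁₃ * C))^2 + (Y - r₁₃ * S)^2) with hr3d
      have hr1sq : r1^2 = (X + μ)^2 + Y^2 := by
        rw [hr1d]; exact Real.sq_sqrt (by positivity)
      have hr2sq : r2^2 = (X - 1 + μ)^2 + Y^2 := by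
        rw [hr2d]; exact Real.sq_sqrt (by positivity)
      have hr3sq : r3^2 = (X - (-μ + r₁₃ * C))^2 + (Y - r₁₃ * S)^2 := by
        rw [hr3d]; exact Real.sq_sqrt (by positivity)
      have hr1' : (0:ℝ) < r1 := hr1
      have hr2' : (0:ℝ) < r2 := hr2
      have hr3' : (0:ℝ) < r3 := hr3
      have E1 : (((X + μ) * C + Y * S) / r₁₃ - μBar + μBar) ^ 2
          + ((-((X + μ) * S) + Y * C) / r₁₃) ^ 2 = (r1/r₁₃)^2 := by
        field_simp
        linear_combination ((X+μ)^2+Y^2) * hpy - hr1sq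
      have E2 : (((X + μ) * C + Y * S) / r₁₃ - μBar - 1 + μBar) ^ 2
          + ((-((X + μ) * S) + Y * C) / r₁₃) ^ 2 = (r3/r₁₃)^2 := by
        field_simp
        linear_combination (((X+μ)^2+Y^2) - r₁₃^2) * hpy - hr3sq
      have E3 : (((X + μ) * C + Y * S) / r₁₃ - μBar - (-μBar + 1 / r₁₃ * C)) ^ 2
          + ((-((X + μ) * S) + Y * C) / r₁₃ - 1 / r₁₃ * -S) ^ 2 = (r2/r₁₃)^2 := by
        field_simp
        linear_combination (((X-1+μ)^2+Y^2)) * hpy - hr2sq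
      rw [E1, E2, E3, Real.sqrt_sq (div_nonneg hr1'.le hr.le),
        Real.sqrt_sq (div_nonneg hr3'.le hr.le), Real.sqrt_sq (div_nonneg hr2'.le hr.le)]
      rw [hμBar, hμBar₂, ← hKepler]
      field_simp
      ring_nf
      linear_combination (-(-((X+μ)*S)+Y*C) * r₁₃^2 * r3^3 * r2^3) * hKepler
  · rw [hγBar, mul_div_cancel_left₀ t₀ hΩ0]
  · rw [hγBar, show (Ω₃ * t₀ + TBar)/Ω₃ = t₀ + T by rw [hT1]; field_simp]
    exact congrFun hphi _
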